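/- arXiv:math/0701572 — 2 statements merged into one kernel-verified Lean document; each statement's English description precedes it below -/
import Mathlib

section
/- Let ν be a nonzero complex number and S the Möbius transformation given by the matrix [[ν, 0],[ν⁻¹, ν⁻¹]]. Let C₁ = {z : |z - α| = r} with r > 0 and r ≠ |1 + α|. Then S maps C₁ onto the circle C₂ = {z : |z - β| = ρ} where β = ν²(r² - α - |α|²)/(r² - |1+α|²) and ρ = r|ν|²/|r² - |1+α|²|. Moreover S maps the exterior of C₁ to the interior of C₂ if and only if |α + 1| < r. -/
set_option maxHeartbeats 1600000 in
lemma circle_poly_key (ν α z : ℂ) (r : ℝ) :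
    Complex.normSq (ν ^ 2 * z * ((r ^ 2 - Complex.normSq (1 + α) : ℝ) : ℂ) -
        ν ^ 2 * ((r : ℂ) ^ 2 - α - (Complex.normSq α : ℂ)) * (z + 1)) -
      r ^ 2 * Complex.normSq ν ^ 2 * Complex.normSq (z + 1) =
    -(Complex.normSq ν ^ 2) * (Complex.normSq (z - α) - r ^ 2) *
      (r ^ 2 - Complex.normSq (1 + α)) := by
  apply Complex.ofReal_injective
  push_cast
  simp only [← Complex.mul_conj]
  simp only [map_sub, map_add, map_mul, map_div₀, map_pow, map_one, Complex.conj_ofReal,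
    Complex.conj_conj]
  ring

set_option maxHeartbeats 1600000 in
theorem circle_image_under_S (ν α : ℂ) (hν : ν ≠ 0) (r : ℝ) (hr : 0 < r)
    (hne : r ≠ ‖1 + α‖)
    (β : ℂ) (ρ : ℝ)
    (hβ : β = ν ^ 2 * ((r : ℂ) ^ 2 - α - (‖α‖ : ℂ) ^ 2) /
      ((r : ℂ) ^ 2 - (‖1 + α‖ : ℂ) ^ 2))
    (hρ : ρ = r * ‖ν‖ ^ 2 / |r ^ 2 - ‖1 + α‖ ^ 2|) :
    ((fun z : ℂ => ν ^ 2 * z / (z + 1)) '' {z : ℂ | ‖z - α‖ = r} =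
      {z : ℂ | ‖z - β‖ = ρ}) ∧
    ((∀ z : ℂ, z ≠ -1 → ‖z - α‖ > r →
        ‖ν ^ 2 * z / (z + 1) - β‖ < ρ) ↔ ‖α + 1‖ < r) := by
  obtain ⟨t, ht⟩ : ∃ x : ℝ, ‖1 + α‖ = x := ⟨_, rfl⟩
  obtain ⟨e, he_def⟩ : ∃ x : ℝ, r ^ 2 - Complex.normSq (1 + α) = x := ⟨_, rfl⟩
  have ht0 : 0 ≤ t := ht ▸ norm_nonneg _
  have hnet : r ≠ t := ht ▸ hne
  have hns1 : Complex.normSq (1 + α) = t ^ 2 := by rw [← Complex.sq_norm, ht]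
  have he_eq : e = r ^ 2 - t ^ 2 := by rw [← he_def, hns1]
  have he : e ≠ 0 := by
    rw [he_eq]
    intro h
    have h2 : (r - t) * (r + t) = 0 := by linear_combination h
    rcases mul_eq_zero.mp h2 with h3 | h3
    · exact hnet (by linarith)
    · nlinarith
  have hec : ((e : ℝ) : ℂ) ≠ 0 := Complex.ofReal_ne_zero.mpr he
  have hnsν : 0 < Complex.normSq ν := Complex.normSq_pos.mpr hν
  have hβ' : β = ν ^ 2 * ((r : ℂ) ^ 2 - α - (Complex.normSq α : ℂ)) / ((e : ℝ) : ℂ) := by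
    rw [hβ,
      show ((‖α‖ : ℝ) : ℂ) ^ 2 = ((Complex.normSq α : ℝ) : ℂ) by
        rw [← Complex.ofReal_pow, Complex.sq_norm],
      show ((‖1 + α‖ : ℝ) : ℂ) ^ 2 = (r : ℂ) ^ 2 - ((e : ℝ) : ℂ) by
        rw [← Complex.ofReal_pow, Complex.sq_norm, ← he_def]; push_cast; ring]
    congr 1
    ring
  have hρ' : ρ = r * ‖ν‖ ^ 2 / |e| := by
    rw [hρ, show r ^ 2 - ‖1 + α‖ ^ 2 = e by rw [ht, ← he_eq]]
  have hρpos : 0 < ρ := by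
    rw [hρ']
    have h1 : 0 < ‖ν‖ := norm_pos_iff.mpr hν
    have h2 : 0 < |e| := abs_pos.mpr he
    positivity
  have hρ2 : ρ ^ 2 = r ^ 2 * Complex.normSq ν ^ 2 / e ^ 2 := by
    rw [hρ', div_pow, mul_pow, sq_abs, ← Complex.sq_norm]
  -- main identity
  have hmain : ∀ z : ℂ, z + 1 ≠ 0 →
      (‖ν ^ 2 * z / (z + 1) - β‖ ^ 2 - ρ ^ 2) * (e * Complex.normSq (z + 1)) =
        -(Complex.normSq ν ^ 2) * (Complex.normSq (z - α) - r ^ 2) := by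
    intro z hz
    have hm : Complex.normSq (z + 1) ≠ 0 := fun h => hz (Complex.normSq_eq_zero.mp h)
    have hfrac : ν ^ 2 * z / (z + 1) - β =
        (ν ^ 2 * z * ((e : ℝ) : ℂ) - ν ^ 2 * ((r : ℂ) ^ 2 - α - (Complex.normSq α : ℂ)) * (z + 1)) /
          ((z + 1) * ((e : ℝ) : ℂ)) := by
      rw [hβ']
      field_simp
    have hkey := circle_poly_key ν α z r
    rw [he_def] at hkey
    rw [Complex.sq_norm, hfrac, map_div₀, Complex.normSq_mul, Complex.normSq_ofReal, hρ2]
    rw [div_sub_div _ _ (mul_ne_zero hm (mul_ne_zero he he)) (pow_ne_zero 2 he), div_mul_eq_mul_div,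
      div_eq_iff (mul_ne_zero (mul_ne_zero hm (mul_ne_zero he he)) (pow_ne_zero 2 he))]
    linear_combination e ^ 3 * Complex.normSq (z + 1) * hkey
  have hexterior_ne : ∀ z : ℂ, ‖z - α‖ ≠ ‖1 + α‖ → z + 1 ≠ 0 := by
    intro z hzt h
    apply hzt
    have hz : z = -1 := by linear_combination h
    rw [hz, show (-1 : ℂ) - α = -(1 + α) by ring, norm_neg]
  constructor
  · ext w
    simp only [Set.mem_image, Set.mem_setOf_eq]
    constructor
    · rintro ⟨z, hz1, rfl⟩
      have hz : z + 1 ≠ 0 := hexterior_ne z (by rw [hz1]; exact hne)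
      have h := hmain z hz
      have hB : Complex.normSq (z - α) = r ^ 2 := by rw [← Complex.sq_norm, hz1]
      rw [hB] at h
      simp only [sub_self, mul_zero, neg_zero] at h
      have hm : Complex.normSq (z + 1) ≠ 0 := fun h' => hz (Complex.normSq_eq_zero.mp h')
      have hem : e * Complex.normSq (z + 1) ≠ 0 := mul_ne_zero he hm
      have h2 : ‖ν ^ 2 * z / (z + 1) - β‖ ^ 2 = ρ ^ 2 := by
        rcases mul_eq_zero.mp h with h3 | h3
        · linarith [sub_eq_zero.mp h3]
        · exact absurd h3 hem
      calc ‖ν ^ 2 * z / (z + 1) - β‖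
          = Real.sqrt (‖ν ^ 2 * z / (z + 1) - β‖ ^ 2) :=
            (Real.sqrt_sq (norm_nonneg _)).symm
        _ = Real.sqrt (ρ ^ 2) := by rw [h2]
        _ = ρ := Real.sqrt_sq hρpos.le
    · intro hw
      have hν2 : ν ^ 2 ≠ 0 := pow_ne_zero _ hν
      have hwne : ν ^ 2 - w ≠ 0 := by
        intro h
        have hwv : w = ν ^ 2 := by linear_combination -h
        have hc : ν ^ 2 - β = -(ν ^ 2 * (1 + (starRingEnd ℂ) α)) / ((e : ℝ) : ℂ) := by
          rw [hβ']
          have h1 : ((Complex.normSq α : ℝ) : ℂ) = α * (starRingEnd ℂ) α :=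
            (Complex.mul_conj _).symm
          have h2 : ((e : ℝ) : ℂ) = (r : ℂ) ^ 2 - (1 + α) * ((1 : ℂ) + (starRingEnd ℂ) α) := by
            rw [show (1 : ℂ) + (starRingEnd ℂ) α = (starRingEnd ℂ) (1 + α) by
                rw [map_add, map_one],
              Complex.mul_conj, ← he_def]
            push_cast
            ring
          rw [h1, h2]
          have h3 : ((r : ℂ) ^ 2 - (1 + α) * ((1 : ℂ) + (starRingEnd ℂ) α)) ≠ 0 := by
            rw [← h2]; exact hec
          field_simp
          ring
        have habs : ‖ν ^ 2 - β‖ = ‖ν‖ ^ 2 * t / |e| := by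
          rw [hc, norm_div, norm_neg, norm_mul, Complex.norm_real, Real.norm_eq_abs, norm_pow,
            show (1 : ℂ) + (starRingEnd ℂ) α = (starRingEnd ℂ) (1 + α) by
              rw [map_add, map_one],
            Complex.norm_conj, ht]
        rw [hwv, habs, hρ'] at hw
        have he' : (0 : ℝ) < |e| := abs_pos.mpr he
        have hνpos : (0 : ℝ) < ‖ν‖ ^ 2 := by
          have := norm_pos_iff.mpr hν; positivity
        apply hnet
        have h4 : ‖ν‖ ^ 2 * t = r * ‖ν‖ ^ 2 := by
          field_simp at hw
          rw [hw]; ring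
        have h5 : ‖ν‖ ^ 2 * t = ‖ν‖ ^ 2 * r := by linarith
        exact (mul_left_cancel₀ (ne_of_gt hνpos) h5).symm
      refine ⟨w / (ν ^ 2 - w), ?_, ?_⟩
      swap
      · show ν ^ 2 * (w / (ν ^ 2 - w)) / (w / (ν ^ 2 - w) + 1) = w
        rw [show w / (ν ^ 2 - w) + 1 = ν ^ 2 / (ν ^ 2 - w) by field_simp; ring,
          ← mul_div_assoc, div_div_div_cancel_right₀ hwne, mul_div_cancel_left₀ _ hν2]
      · set z := w / (ν ^ 2 - w) with hz_def
        have hz1 : z + 1 = ν ^ 2 / (ν ^ 2 - w) := by rw [hz_def]; field_simp; ring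
        have hz : z + 1 ≠ 0 := by rw [hz1]; exact div_ne_zero hν2 hwne
        have hSz : ν ^ 2 * z / (z + 1) = w := by
          rw [hz1, hz_def, ← mul_div_assoc, div_div_div_cancel_right₀ hwne,
            mul_div_cancel_left₀ _ hν2]
        have h := hmain z hz
        rw [hSz, hw] at h
        simp only [sub_self, zero_mul] at h
        have hn2 : Complex.normSq ν ^ 2 ≠ 0 := by positivity
        have hB : Complex.normSq (z - α) = r ^ 2 := by
          rcases mul_eq_zero.mp h.symm with h3 | h3
          · exact absurd (neg_eq_zero.mp h3) hn2
          · linarith [sub_eq_zero.mp h3]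
        calc ‖z - α‖ = Real.sqrt (Complex.normSq (z - α)) := Complex.norm_def _
          _ = Real.sqrt (r ^ 2) := by rw [hB]
          _ = r := Real.sqrt_sq hr.le
  · have htα : ‖α + 1‖ = t := by rw [← ht, add_comm]
    constructor
    · intro H
      rw [htα]
      by_contra hlt
      push_neg at hlt
      have htr : r < t := lt_of_le_of_ne hlt hnet
      have heneg : e < 0 := by rw [he_eq]; nlinarith
      obtain ⟨z₀, hz01, hz02⟩ : ∃ z₀ : ℂ, z₀ ≠ -1 ∧ ‖z₀ - α‖ > r := by
        by_cases hcase : α + ((2 * r : ℝ) : ℂ) = -1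
        · refine ⟨α + ((3 * r : ℝ) : ℂ), ?_, ?_⟩
          · intro h
            rw [← hcase] at h
            have h1 : ((3 * r : ℝ) : ℂ) = ((2 * r : ℝ) : ℂ) := by linear_combination h
            have h2 : (3 : ℝ) * r = 2 * r := by exact_mod_cast h1
            linarith
          · rw [show α + ((3 * r : ℝ) : ℂ) - α = ((3 * r : ℝ) : ℂ) by ring,
              Complex.norm_real, Real.norm_eq_abs, abs_of_pos (by linarith)]
            linarith
        · refine ⟨α + ((2 * r : ℝ) : ℂ), hcase, ?_⟩
          rw [show α + ((2 * r : ℝ) : ℂ) - α = ((2 * r : ℝ) : ℂ) by ring,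
            Complex.norm_real, Real.norm_eq_abs, abs_of_pos (by linarith)]
          linarith
      have hz0 : z₀ + 1 ≠ 0 := fun h => hz01 (by linear_combination h)
      have hlt2 := H z₀ hz01 hz02
      have hsq : ‖ν ^ 2 * z₀ / (z₀ + 1) - β‖ ^ 2 < ρ ^ 2 :=
        pow_lt_pow_left₀ hlt2 (norm_nonneg _) two_ne_zero
      have h := hmain z₀ hz0
      have hm : 0 < Complex.normSq (z₀ + 1) := Complex.normSq_pos.mpr hz0
      have hB : r ^ 2 < Complex.normSq (z₀ - α) := by
        rw [← Complex.sq_norm]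
        exact pow_lt_pow_left₀ hz02 hr.le two_ne_zero
      have hpos : 0 < Complex.normSq ν ^ 2 * (Complex.normSq (z₀ - α) - r ^ 2) :=
        mul_pos (by positivity) (by linarith)
      nlinarith [mul_pos (mul_pos (sub_pos.mpr hsq) (neg_pos.mpr heneg)) hm]
    · intro hlt z hz1 hz2
      rw [htα] at hlt
      have hepos : 0 < e := by rw [he_eq]; nlinarith
      have hz : z + 1 ≠ 0 := fun h => hz1 (by linear_combination h)
      have h := hmain z hz
      have hm : 0 < Complex.normSq (z + 1) := Complex.normSq_pos.mpr hz
      have hB : r ^ 2 < Complex.normSq (z - α) := by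
        rw [← Complex.sq_norm]
        exact pow_lt_pow_left₀ hz2 hr.le two_ne_zero
      have hpos : 0 < Complex.normSq ν ^ 2 * (Complex.normSq (z - α) - r ^ 2) :=
        mul_pos (by positivity) (by linarith)
      have hsq : ‖ν ^ 2 * z / (z + 1) - β‖ ^ 2 < ρ ^ 2 := by
        nlinarith [mul_pos hepos hm]
      exact lt_of_pow_lt_pow_left₀ 2 hρpos.le hsq
end

section
/- Let T(z) = z + 2λ with λ = |λ|e^{iω}, 0 ≤ ω ≤ π/2, λ ≠ 0, and for n ∈ ℤ and φ ∈ (-π/2, π/2) consider the family of circles Cₙ± = {z : |z ± e^{iφ}/cos φ + 2λn| = 1/cos φ}. There exists φ such that all these circles have pairwise disjoint interiors if and only if (|λ| ≥ 1 and π/3 ≤ ω ≤ π/2) or (Re(λ e^{-iπ/3}) ≥ 1 and 0 ≤ ω ≤ π/3). -/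
open Real Metric

set_option maxHeartbeats 1000000

namespace ICCD

noncomputable def C (φ : ℝ) : ℂ := Complex.exp (φ * Complex.I) / (Real.cos φ : ℂ)

lemma C_eq (φ : ℝ) (h : Real.cos φ ≠ 0) : C φ = 1 + (Real.tan φ : ℂ) * Complex.I := by
  have h' : Complex.cos φ ≠ 0 := by rw [← Complex.ofReal_cos]; exact_mod_cast h
  rw [C, Complex.exp_mul_I, Real.tan_eq_sin_div_cos, ← Complex.ofReal_cos,
    ← Complex.ofReal_sin]
  push_cast
  field_simp

lemma abs_C (φ : ℝ) (h : 0 < Real.cos φ) : ‖C φ‖ = 1 / Real.cos φ := by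
  rw [C, norm_div, Complex.norm_exp_ofReal_mul_I, Complex.norm_real, Real.norm_eq_abs, abs_of_pos h]

lemma key_k (l : ℂ) (φ : ℝ) (hc : 0 < Real.cos φ)
    (h1 : 1 / Real.cos φ ≤ ‖l‖)
    (h2 : 1 / Real.cos φ ≤ ‖C φ - l‖)
    (h3 : 1 / Real.cos φ ≤ ‖C φ + l‖) (k : ℤ) :
    1 / Real.cos φ ≤ ‖C φ - l * k‖ := by
  set ρ := 1 / Real.cos φ with hρ
  have hρ0 : 0 < ρ := by positivity
  rcases eq_or_ne k 0 with rfl | hk0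
  · simp only [Int.cast_zero, mul_zero, sub_zero]
    rw [abs_C φ hc]
  rcases eq_or_ne k 1 with rfl | hk1
  · simpa using h2
  rcases eq_or_ne k (-1) with rfl | hkm
  · simpa [sub_neg_eq_add] using h3
  have hk2 : (2:ℝ) ≤ |(k:ℝ)| := by
    have h5 : (2:ℤ) ≤ |k| := by rcases abs_cases k with ⟨h,_⟩|⟨h,_⟩ <;> omega
    calc (2:ℝ) = ((2:ℤ):ℝ) := by norm_num
    _ ≤ ((|k|:ℤ):ℝ) := by exact_mod_cast h5
    _ = |(k:ℝ)| := by push_cast; ring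
  have h4 : 2 * ρ ≤ ‖l * k‖ := by
    rw [norm_mul, Complex.norm_intCast]
    calc 2 * ρ ≤ |(k:ℝ)| * ρ := by nlinarith
    _ ≤ |(k:ℝ)| * ‖l‖ := by nlinarith [norm_nonneg l]
    _ = ‖l‖ * |(k:ℝ)| := by ring
  have h6 := norm_sub_norm_le (l * (k:ℂ)) (C φ)
  rw [norm_sub_rev] at h6
  rw [abs_C φ hc] at h6
  linarith

lemma habs2 (z : ℂ) : ‖2 * z‖ = 2 * ‖z‖ := by
  rw [norm_mul, Complex.norm_two]

lemma cond_iff (l : ℂ) (φ : ℝ) (hc : 0 < Real.cos φ) :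
    (∀ (n m : ℤ) (s t : Bool), (n, s) ≠ (m, t) →
        Disjoint
          (Metric.ball ((if s then -1 else 1) * Complex.exp (φ * Complex.I) / (Real.cos φ : ℂ)
              - 2 * l * n) (1 / Real.cos φ))
          (Metric.ball ((if t then -1 else 1) * Complex.exp (φ * Complex.I) / (Real.cos φ : ℂ)
              - 2 * l * m) (1 / Real.cos φ))) ↔
    (1 / Real.cos φ ≤ ‖l‖ ∧ 1 / Real.cos φ ≤ ‖C φ - l‖ ∧
      1 / Real.cos φ ≤ ‖C φ + l‖) := by
  have hρ0 : 0 < 1 / Real.cos φ := by positivity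
  have hdist : ∀ (s t : Bool) (n m : ℤ),
      Disjoint
        (Metric.ball ((if s then -1 else 1) * Complex.exp (φ * Complex.I) / (Real.cos φ : ℂ)
            - 2 * l * n) (1 / Real.cos φ))
        (Metric.ball ((if t then -1 else 1) * Complex.exp (φ * Complex.I) / (Real.cos φ : ℂ)
            - 2 * l * m) (1 / Real.cos φ)) ↔
      2 * (1 / Real.cos φ) ≤
        ‖(((if s then -1 else 1) : ℂ) - (if t then -1 else 1)) * C φ
          - 2 * l * ((n : ℂ) - m)‖ := by
    intro s t n m
    rw [disjoint_ball_ball_iff hρ0 hρ0, Complex.dist_eq]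
    have he : ((if s then -1 else 1) : ℂ) * Complex.exp (φ * Complex.I) / (Real.cos φ : ℂ)
        - 2 * l * n - ((if t then -1 else 1) * Complex.exp (φ * Complex.I) / (Real.cos φ : ℂ)
        - 2 * l * m)
        = (((if s then -1 else 1) : ℂ) - (if t then -1 else 1)) * C φ - 2 * l * ((n : ℂ) - m) := by
      rw [C]; ring
    rw [he]
    constructor <;> intro h <;> linarith
  constructor
  · intro H
    refine ⟨?_, ?_, ?_⟩
    · have := (hdist false false 0 1).mp (H 0 1 false false (by simp))
      simp only [if_neg Bool.false_ne_true] at this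
      push_cast at this
      have he : ((1:ℂ) - 1) * C φ - 2 * l * ((0:ℂ) - 1) = 2 * l := by ring
      rw [he, habs2] at this
      linarith
    · have := (hdist false true 1 0).mp (H 1 0 false true (by simp))
      simp only [Bool.false_eq_true, if_false, if_true] at this
      push_cast at this
      have he : ((1:ℂ) - -1) * C φ - 2 * l * ((1:ℂ) - 0) = 2 * (C φ - l) := by ring
      rw [he, habs2] at this
      linarith
    · have := (hdist false true 0 1).mp (H 0 1 false true (by simp))
      simp only [Bool.false_eq_true, if_false, if_true] at this
      push_cast at this
      have he : ((1:ℂ) - -1) * C φ - 2 * l * ((0:ℂ) - 1) = 2 * (C φ + l) := by ring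
      rw [he, habs2] at this
      linarith
  · rintro ⟨h1, h2, h3⟩ n m s t hne
    rw [hdist]
    have hsame : ∀ n m : ℤ, n ≠ m →
        2 * (1 / Real.cos φ) ≤ 2 * ‖l * ((n - m : ℤ) : ℂ)‖ := by
      intro n m hnm
      rw [norm_mul, Complex.norm_intCast]
      have h5 : (1:ℝ) ≤ |((n - m : ℤ) : ℝ)| := by
        have : (1:ℤ) ≤ |n - m| := by rcases abs_cases (n - m) with ⟨h,_⟩|⟨h,_⟩ <;> omega
        calc (1:ℝ) = ((1:ℤ):ℝ) := by norm_num
        _ ≤ ((|n - m|:ℤ):ℝ) := by exact_mod_cast this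
        _ = |((n - m : ℤ) : ℝ)| := by push_cast; ring
      nlinarith [norm_nonneg l]
    cases s <;> cases t
    · simp only [Bool.false_eq_true, if_false]
      have he : ((1:ℂ) - 1) * C φ - 2 * l * ((n:ℂ) - m) = -(2 * (l * ((n - m : ℤ) : ℂ))) := by
        push_cast; ring
      rw [he, norm_neg, habs2]
      exact hsame n m (by simpa using hne)
    · simp only [Bool.false_eq_true, if_false, if_true]
      have he : ((1:ℂ) - -1) * C φ - 2 * l * ((n:ℂ) - m)
          = 2 * (C φ - l * ((n - m : ℤ) : ℂ)) := by push_cast; ring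
      rw [he, habs2]
      have := key_k l φ hc h1 h2 h3 (n - m)
      linarith
    · simp only [Bool.false_eq_true, if_false, if_true]
      have he : ((-1:ℂ) - 1) * C φ - 2 * l * ((n:ℂ) - m)
          = -(2 * (C φ - l * ((m - n : ℤ) : ℂ))) := by push_cast; ring
      rw [he, norm_neg, habs2]
      have := key_k l φ hc h1 h2 h3 (m - n)
      linarith
    · simp only [if_true]
      have he : ((-1:ℂ) - -1) * C φ - 2 * l * ((n:ℂ) - m) = -(2 * (l * ((n - m : ℤ) : ℂ))) := by
        push_cast; ring
      rw [he, norm_neg, habs2]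
      exact hsame n m (by simpa using hne)

lemma coords (z : ℂ) (φ : ℝ) (hc : 0 < Real.cos φ) :
    (1 / Real.cos φ ≤ ‖z‖ ∧ 1 / Real.cos φ ≤ ‖C φ - z‖ ∧
      1 / Real.cos φ ≤ ‖C φ + z‖) ↔
    (1 + Real.tan φ ^ 2 ≤ z.re ^ 2 + z.im ^ 2 ∧
      2 * z.re + 2 * Real.tan φ * z.im ≤ z.re ^ 2 + z.im ^ 2 ∧
      -(2 * z.re + 2 * Real.tan φ * z.im) ≤ z.re ^ 2 + z.im ^ 2) := by
  have hρ2 : (1 / Real.cos φ) ^ 2 = 1 + Real.tan φ ^ 2 := by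
    rw [Real.tan_eq_sin_div_cos]
    have h := Real.sin_sq_add_cos_sq φ
    field_simp
    linarith
  have key : ∀ w : ℂ, (1 / Real.cos φ ≤ ‖w‖ ↔
      1 + Real.tan φ ^ 2 ≤ w.re ^ 2 + w.im ^ 2) := by
    intro w
    rw [Complex.norm_def, Real.le_sqrt (by positivity) (Complex.normSq_nonneg w),
      Complex.normSq_apply, hρ2]
    constructor <;> intro h <;> nlinarith
  rw [key z, key _, key _, C_eq φ hc.ne']
  simp only [Complex.sub_re, Complex.add_re, Complex.sub_im, Complex.add_im, Complex.one_re,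
    Complex.one_im, Complex.mul_re, Complex.mul_im, Complex.I_re, Complex.I_im,
    Complex.ofReal_re, Complex.ofReal_im]
  constructor <;> rintro ⟨a, b, c⟩ <;> exact ⟨by nlinarith, by nlinarith, by nlinarith⟩

lemma core (p q u s : ℝ) (hp : 0 ≤ p) (hq : 0 ≤ q) (hu : 0 ≤ u)
    (hs : s^2 = 3) (hs0 : 0 < s)
    (hq2 : q^2 = 4 + 4*u^2 - p^2)
    (h2 : 2*q*(s+u) ≤ 4 + 4*u^2 - 2*p + 2*u*s*p) : 2 ≤ p := by
  have hR : 0 ≤ 4 + 4*u^2 - 2*p + 2*u*s*p :=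
    le_trans (by positivity) h2
  have key : (2*q*(s+u))^2 ≤ (4 + 4*u^2 - 2*p + 2*u*s*p)^2 := by
    have h0 : 0 ≤ 2*q*(s+u) := by positivity
    nlinarith [mul_self_le_mul_self h0 h2]
  have expand : (4 + 4*u^2 - 2*p + 2*u*s*p)^2 - (2*q*(s+u))^2
      = 4*(4+4*u^2)*((p-2)*(p+1+u*s)) := by
    linear_combination (4*(1+u^2)*(p^2-4))*hs - 4*(s+u)^2*hq2
  have hfac : 0 ≤ 4*(4+4*u^2)*((p-2)*(p+1+u*s)) := by rw [← expand]; linarith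
  have c1 : (0:ℝ) < 4+4*u^2 := by positivity
  have c2 : (0:ℝ) < p+1+u*s := by positivity
  nlinarith [hfac, mul_pos c1 c2]

lemma step2 (x y u s : ℝ) (hx : 0 ≤ x) (hy : 0 ≤ y) (hyx : y ≤ s*x)
    (hs : s^2 = 3) (hs0 : 0 < s) (hu : 0 ≤ u)
    (he : x^2 + y^2 = 1 + u^2) (h2 : 2*x - 2*u*y ≤ 1 + u^2) : 2 ≤ x + s*y := by
  set p := x + s*y with hpd
  set q := s*x - y with hqd
  have hp : 0 ≤ p := by positivity
  have hq : 0 ≤ q := by simp only [hqd]; linarith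
  have hq2 : q^2 = 4 + 4*u^2 - p^2 := by
    simp only [hqd, hpd]
    linear_combination (x^2+y^2)*hs + 4*he
  have h2' : 2*q*(s+u) ≤ 4 + 4*u^2 - 2*p + 2*u*s*p := by
    have hid : 2*q*(s+u) - (4 + 4*u^2 - 2*p + 2*u*s*p)
        = 4*(2*x - 2*u*y - 1 - u^2) + (s^2-3)*(2*x - 2*u*y) := by
      simp only [hqd, hpd]; ring
    rw [hs] at hid
    nlinarith [hid]
  exact core p q u s hp hq hu hs hs0 hq2 h2'

lemma exists_t_iff (r ω : ℝ) (hr : 0 < r) (hω0 : 0 ≤ ω) (hω1 : ω ≤ π/2) :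
    (∃ t : ℝ, 1 + t^2 ≤ r^2 ∧ 2*(r*Real.cos ω) + 2*t*(r*Real.sin ω) ≤ r^2 ∧
      -(2*(r*Real.cos ω) + 2*t*(r*Real.sin ω)) ≤ r^2) ↔
    ((1 ≤ r ∧ π/3 ≤ ω) ∨ (1 ≤ r * Real.cos (ω - π/3) ∧ ω ≤ π/3)) := by
  have hπ : 0 < π := pi_pos
  set x := r * Real.cos ω with hxd
  clear_value x
  set y := r * Real.sin ω with hyd
  clear_value y
  have hx : 0 ≤ x := hxd ▸ mul_nonneg hr.le (Real.cos_nonneg_of_mem_Icc ⟨by linarith, hω1⟩)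
  have hy : 0 ≤ y := hyd ▸ mul_nonneg hr.le
    (Real.sin_nonneg_of_nonneg_of_le_pi hω0 (by linarith))
  have hxy2 : x^2 + y^2 = r^2 := by
    simp only [hxd, hyd]
    linear_combination r^2 * (Real.sin_sq_add_cos_sq ω)
  have hs : (Real.sqrt 3)^2 = 3 := Real.sq_sqrt (by norm_num)
  have hs0 : (0:ℝ) < Real.sqrt 3 := by positivity
  constructor
  · rintro ⟨t, h1, h2, h3⟩
    have hr1 : 1 ≤ r := by nlinarith
    by_cases hω : π/3 ≤ ω
    · exact Or.inl ⟨hr1, hω⟩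
    · push_neg at hω
      refine Or.inr ⟨?_, hω.le⟩
      have hsin : 0 ≤ Real.sin (π/3 - ω) :=
        Real.sin_nonneg_of_nonneg_of_le_pi (by linarith) (by linarith)
      have hyx : y ≤ Real.sqrt 3 * x := by
        have hid : Real.sqrt 3 * x - y = 2 * r * Real.sin (π/3 - ω) := by
          simp only [hxd, hyd]
          rw [Real.sin_sub, Real.sin_pi_div_three, Real.cos_pi_div_three]
          ring
        nlinarith [mul_nonneg hr.le hsin]
      set u := Real.sqrt (r^2 - 1) with hud
      clear_value u
      have hu : 0 ≤ u := hud ▸ Real.sqrt_nonneg _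
      have hu2 : u^2 = r^2 - 1 := hud ▸ Real.sq_sqrt (by nlinarith)
      have he : x^2 + y^2 = 1 + u^2 := by rw [hxy2, hu2]; ring
      have htu : -u ≤ t := by nlinarith [sq_nonneg (t + u)]
      have h2x : 2*x - 2*u*y ≤ 1 + u^2 := by
        have : 0 ≤ (t + u) * y := mul_nonneg (by linarith) hy
        nlinarith
      have hfin := step2 x y u (Real.sqrt 3) hx hy hyx hs hs0 hu he h2x
      have hid2 : r * Real.cos (ω - π/3) = x/2 + Real.sqrt 3 * y / 2 := by
        simp only [hxd, hyd]
        rw [Real.cos_sub, Real.cos_pi_div_three, Real.sin_pi_div_three]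
        ring
      rw [hid2]; linarith
  · rintro (⟨hr1, hω⟩ | ⟨h1, hω⟩)
    · refine ⟨0, by nlinarith, ?_, ?_⟩
      · have hc : Real.cos ω ≤ 1/2 := by
          have := Real.cos_le_cos_of_nonneg_of_le_pi (by linarith : 0 ≤ π/3)
            (by linarith) hω
          rwa [Real.cos_pi_div_three] at this
        have hxr : x ≤ r/2 := by simp only [hxd]; nlinarith
        nlinarith
      · nlinarith
    · set ψ := π/3 - ω with hψd
      clear_value ψ
      set c := Real.cos ψ with hcd
      clear_value c
      set s' := Real.sin ψ with hsd
      clear_value s'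
      have hψ0 : 0 ≤ ψ := by simp only [hψd]; linarith
      have hψ1 : ψ ≤ π/3 := by simp only [hψd]; linarith
      have hcψ : (0:ℝ) < c := hcd ▸ Real.cos_pos_of_mem_Ioo
        (Set.mem_Ioo.mpr ⟨by linarith, by linarith⟩)
      have hsψ : 0 ≤ s' := hsd ▸ Real.sin_nonneg_of_nonneg_of_le_pi hψ0 (by linarith)
      have hpy : s'^2 + c^2 = 1 := by rw [hsd, hcd]; exact Real.sin_sq_add_cos_sq ψ
      have hcs : Real.cos (ω - π/3) = c := by
        rw [show ω - π/3 = -ψ by rw [hψd]; ring, Real.cos_neg, hcd]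
      rw [hcs] at h1
      set t := -(s'/c) with htd
      clear_value t
      have htc : t * c = -s' := by simp only [htd]; field_simp
      have hxc : x*c - y*s' = r/2 := by
        have hω3 : ω + ψ = π/3 := by simp only [hψd]; ring
        have := Real.cos_add ω ψ
        rw [hω3, Real.cos_pi_div_three] at this
        rw [hxd, hyd, hcd, hsd]
        linear_combination r * this.symm
      have h2c : (2*x + 2*t*y)*c = r := by linear_combination 2*y*htc + 2*hxc
      have hA : (1+t^2)*c^2 = 1 := by linear_combination (t*c - s')*htc + hpy
      refine ⟨t, ?_, ?_, ?_⟩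
      · nlinarith [hA, mul_pos hcψ hcψ, sq_nonneg (r*c-1), h1]
      · nlinarith [h2c, h1, hcψ, hr]
      · nlinarith [h2c, hcψ, hr, mul_pos hr hr]

end ICCD

open ICCD in
theorem infinite_circle_chain_disjoint (l : ℂ) (hl : l ≠ 0) (ω : ℝ)
    (hω₀ : 0 ≤ ω) (hω₁ : ω ≤ π / 2)
    (hrep : l = (‖l‖ : ℂ) * Complex.exp (ω * Complex.I)) :
    (∃ φ : ℝ, -(π / 2) < φ ∧ φ < π / 2 ∧
      ∀ (n m : ℤ) (s t : Bool), (n, s) ≠ (m, t) →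
        Disjoint
          (Metric.ball ((if s then -1 else 1) * Complex.exp (φ * Complex.I) / (Real.cos φ : ℂ)
              - 2 * l * n) (1 / Real.cos φ))
          (Metric.ball ((if t then -1 else 1) * Complex.exp (φ * Complex.I) / (Real.cos φ : ℂ)
              - 2 * l * m) (1 / Real.cos φ))) ↔
      ((‖l‖ ≥ 1 ∧ π / 3 ≤ ω ∧ ω ≤ π / 2) ∨
        ((l * Complex.exp (-(π / 3 : ℝ) * Complex.I)).re ≥ 1 ∧ 0 ≤ ω ∧ ω ≤ π / 3)) := by
  set r := ‖l‖ with hrd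
  have hr : 0 < r := by
    rw [hrd]; exact norm_pos_iff.mpr hl
  have hre : l.re = r * Real.cos ω := by
    rw [hrep, Complex.re_ofReal_mul, Complex.exp_ofReal_mul_I_re]
  have him : l.im = r * Real.sin ω := by
    rw [hrep, Complex.im_ofReal_mul, Complex.exp_ofReal_mul_I_im]
  have hre3 : (l * Complex.exp (-(π / 3 : ℝ) * Complex.I)).re = r * Real.cos (ω - π/3) := by
    rw [hrep, mul_assoc, ← Complex.exp_add,
      show (ω : ℂ) * Complex.I + (-(π / 3 : ℝ) : ℂ) * Complex.I = ((ω - π/3 : ℝ) : ℂ) * Complex.I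
        by push_cast; ring, Complex.re_ofReal_mul, Complex.exp_ofReal_mul_I_re]
  have step1 : (∃ φ : ℝ, -(π / 2) < φ ∧ φ < π / 2 ∧
      ∀ (n m : ℤ) (s t : Bool), (n, s) ≠ (m, t) →
        Disjoint
          (Metric.ball ((if s then -1 else 1) * Complex.exp (φ * Complex.I) / (Real.cos φ : ℂ)
              - 2 * l * n) (1 / Real.cos φ))
          (Metric.ball ((if t then -1 else 1) * Complex.exp (φ * Complex.I) / (Real.cos φ : ℂ)
              - 2 * l * m) (1 / Real.cos φ))) ↔
      (∃ t : ℝ, 1 + t^2 ≤ r^2 ∧ 2*(r*Real.cos ω) + 2*t*(r*Real.sin ω) ≤ r^2 ∧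
        -(2*(r*Real.cos ω) + 2*t*(r*Real.sin ω)) ≤ r^2) := by
    have hco : ∀ t : ℝ, (1 + t^2 ≤ l.re^2 + l.im^2 ∧
        2*l.re + 2*t*l.im ≤ l.re^2 + l.im^2 ∧ -(2*l.re + 2*t*l.im) ≤ l.re^2 + l.im^2) ↔
        (1 + t^2 ≤ r^2 ∧ 2*(r*Real.cos ω) + 2*t*(r*Real.sin ω) ≤ r^2 ∧
        -(2*(r*Real.cos ω) + 2*t*(r*Real.sin ω)) ≤ r^2) := by
      intro t
      have h2 : l.re^2 + l.im^2 = r^2 := by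
        rw [hre, him]
        linear_combination r^2 * (Real.sin_sq_add_cos_sq ω)
      rw [h2, hre, him]
    constructor
    · rintro ⟨φ, hφ1, hφ2, H⟩
      have hc : 0 < Real.cos φ := Real.cos_pos_of_mem_Ioo (Set.mem_Ioo.mpr ⟨hφ1, hφ2⟩)
      have := ((coords l φ hc).mp ((cond_iff l φ hc).mp H))
      exact ⟨Real.tan φ, (hco (Real.tan φ)).mp
        ⟨by linarith [this.1], by linarith [this.2.1], by linarith [this.2.2]⟩⟩
    · rintro ⟨t, ht⟩
      refine ⟨Real.arctan t, Real.neg_pi_div_two_lt_arctan t, Real.arctan_lt_pi_div_two t, ?_⟩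
      have hc : 0 < Real.cos (Real.arctan t) := Real.cos_arctan_pos t
      apply (cond_iff l _ hc).mpr
      apply (coords l _ hc).mpr
      rw [Real.tan_arctan]
      exact (hco t).mpr ht
  rw [step1, exists_t_iff r ω hr hω₀ hω₁, hre3]
  constructor
  · rintro (⟨h1, h2⟩ | ⟨h1, h2⟩)
    · exact Or.inl ⟨h1, h2, hω₁⟩
    · exact Or.inr ⟨h1, hω₀, h2⟩
  · rintro (⟨h1, h2, _⟩ | ⟨h1, _, h2⟩)
    · exact Or.inl ⟨h1, h2⟩
    · exact Or.inr ⟨h1, h2⟩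
end
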